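/- There exists a fair division instance with 5 identical groups of 3 agents each and 9 goods with binary utilities such that no allocation is PROP1 for all agents. Concretely, with goods {1,...,9} and in each group: agent 1 values goods 1–6 at 1 and 7–9 at 0; agent 2 values goods 1–3 and 7–9 at 1 and 4–6 at 0; agent 3 values goods 4–9 at 1 and 1–3 at 0; every partition of the 9 goods into 5 bundles fails PROP1 for some agent. -/

import Mathlib

lemma key_aux (v' : Fin 9 → ℝ) (S : Finset (Fin 9))
    (hz : ∀ a ∈ S, v' a = 0) (hone : ∀ a, v' a ≤ 1) (hsum6 : ∑ a, v' a = 6)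
    (B : Finset (Fin 9)) (hd : Disjoint B S) (hc : B.card ≤ 1) :
    ∑ a ∈ S ∪ B, v' a < (∑ a, v' a) / 5 := by
  rw [hsum6, Finset.sum_union hd.symm, Finset.sum_eq_zero hz, zero_add]
  have h1 : ∑ a ∈ B, v' a ≤ (B.card : ℝ) * 1 := by
    calc ∑ a ∈ B, v' a ≤ B.card • (1:ℝ) :=
          Finset.sum_le_card_nsmul B v' 1 (fun a _ => hone a)
    _ = (B.card : ℝ) * 1 := by simp
  have h2 : (B.card : ℝ) ≤ 1 := by exact_mod_cast hc
  linarith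

/-- There is a concrete instance with 5 identical groups of 3 agents and 9 goods
with binary utilities in which no allocation is PROP1 for all agents. -/
theorem stmt_2 :
    ∃ v : Fin 3 → Fin 9 → ℝ,
      v = ![![1, 1, 1, 1, 1, 1, 0, 0, 0],
            ![1, 1, 1, 0, 0, 0, 1, 1, 1],
            ![0, 0, 0, 1, 1, 1, 1, 1, 1]] ∧
      ∀ π : Fin 9 → Fin 5, ∃ (g : Fin 5) (i : Fin 3),
        ∀ B : Finset (Fin 9),
          Disjoint B (Finset.univ.filter (fun a => π a = g)) → B.card ≤ 1 →
          ∑ a ∈ Finset.univ.filter (fun a => π a = g) ∪ B, v i a <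
            (∑ a, v i a) / 5 := by
  refine ⟨_, rfl, ?_⟩
  intro π
  have hsum : (9 : ℕ) = ∑ g : Fin 5, (Finset.univ.filter (fun a => π a = g)).card := by
    have := Finset.card_eq_sum_card_fiberwise (f := π) (s := (Finset.univ : Finset (Fin 9)))
      (t := (Finset.univ : Finset (Fin 5))) (fun x _ => Finset.mem_univ _)
    simpa using this
  have hkey : ∃ g : Fin 5, ∀ a ∈ Finset.univ.filter (fun a => π a = g),
      ∀ b ∈ Finset.univ.filter (fun b => π b = g), (a : ℕ) / 3 = (b : ℕ) / 3 := by
    by_contra h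
    push_neg at h
    have h2 : ∀ g : Fin 5, 2 ≤ (Finset.univ.filter (fun a => π a = g)).card := by
      intro g
      obtain ⟨a, ha, b, hb, hne⟩ := h g
      exact Finset.one_lt_card.mpr ⟨a, ha, b, hb, fun e => hne (by rw [e])⟩
    have h10 : 10 ≤ ∑ g : Fin 5, (Finset.univ.filter (fun a => π a = g)).card := by
      calc (10:ℕ) = ∑ _g : Fin 5, 2 := by simp
      _ ≤ _ := Finset.sum_le_sum (fun g _ => h2 g)
    omega
  obtain ⟨g, hg⟩ := hkey
  rcases (Finset.univ.filter (fun a => π a = g)).eq_empty_or_nonempty with he | ⟨a₀, ha₀⟩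
  · refine ⟨g, 0, fun B hd hc => key_aux _ _ ?_ ?_ ?_ B hd hc⟩
    · intro a ha; rw [he] at ha; exact absurd ha (Finset.notMem_empty a)
    · intro a; fin_cases a <;> norm_num [Matrix.cons_val_succ, Matrix.vecHead, Matrix.vecTail]
    · norm_num [Fin.sum_univ_succ, Matrix.cons_val_succ]
  · have hj : (a₀ : ℕ) / 3 = 0 ∨ (a₀ : ℕ) / 3 = 1 ∨ (a₀ : ℕ) / 3 = 2 := by omega
    rcases hj with h3 | h3 | h3
    · refine ⟨g, 2, fun B hd hc => key_aux _ _ ?_ ?_ ?_ B hd hc⟩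
      · intro a ha
        have := hg a ha a₀ ha₀
        rw [h3] at this
        clear hg hsum ha₀ hd hc; fin_cases a <;> simp_all <;> first | rfl | norm_num [Matrix.cons_val_succ]
      · intro a; fin_cases a <;> norm_num [Matrix.cons_val_succ, Matrix.vecHead, Matrix.vecTail, Matrix.cons_val_two]
      · norm_num [Fin.sum_univ_succ, Matrix.cons_val_succ, Matrix.cons_val_two]
    · refine ⟨g, 1, fun B hd hc => key_aux _ _ ?_ ?_ ?_ B hd hc⟩
      · intro a ha
        have := hg a ha a₀ ha₀
        rw [h3] at this
        clear hg hsum ha₀ hd hc; fin_cases a <;> simp_all <;> first | rfl | norm_num [Matrix.cons_val_succ]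
      · intro a; fin_cases a <;> norm_num [Matrix.cons_val_succ, Matrix.vecHead, Matrix.vecTail]
      · norm_num [Fin.sum_univ_succ, Matrix.cons_val_succ]
    · refine ⟨g, 0, fun B hd hc => key_aux _ _ ?_ ?_ ?_ B hd hc⟩
      · intro a ha
        have := hg a ha a₀ ha₀
        rw [h3] at this
        clear hg hsum ha₀ hd hc; fin_cases a <;> simp_all <;> first | rfl | norm_num [Matrix.cons_val_succ]
      · intro a; fin_cases a <;> norm_num [Matrix.cons_val_succ, Matrix.vecHead, Matrix.vecTail]
      · norm_num [Fin.sum_univ_succ, Matrix.cons_val_succ]
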